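/- For any bypass (α,u) in Q, one has W(u) < W(α). -/

import Mathlib

attribute [local instance] Classical.propDecidable

/-- A quiver given by a set of vertices, a set of arrows and source/target maps. -/
structure Quiv where
  V : Type
  A : Type
  s : A → V
  t : A → V

namespace Quiv

section Basic

variable (Q : Quiv)

/-- A (nontrivial) path is a nonempty list of composable arrows, listed in the
order they are traversed. -/
def IsPath (p : List Q.A) : Prop :=
  p ≠ [] ∧ p.Chain' (fun a b => Q.t a = Q.s b)

/-- Source of a nonempty list of arrows. -/
def src (p : List Q.A) : Option Q.V := p.head?.map Q.s

/-- Target of a nonempty list of arrows. -/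
def tgt (p : List Q.A) : Option Q.V := p.getLast?.map Q.t

/-- `Q` has no oriented cycle: no nontrivial path has equal source and target. -/
def NoCycle : Prop := ∀ p, Q.IsPath p → Q.src p ≠ Q.tgt p

/-- `Q` has no multiple arrows: distinct arrows never have both the same source
and the same target. -/
def NoMultipleArrows : Prop :=
  ∀ a b : Q.A, Q.s a = Q.s b → Q.t a = Q.t b → a = b

/-- A bypass `(α, u)`: `u` is a path parallel to the arrow `α` and distinct from it. -/
def IsBypass (α : Q.A) (u : List Q.A) : Prop :=
  Q.IsPath u ∧ Q.src u = some (Q.s α) ∧ Q.tgt u = some (Q.t α) ∧ u ≠ [α]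

/-- `Repl n u v` : `v` is obtained from `u` by replacing `n` of its arrows (at
increasing positions) by bypass paths. -/
inductive Repl : ℕ → List Q.A → List Q.A → Prop
  | nil : Repl 0 [] []
  | keep (a : Q.A) {n : ℕ} {u v : List Q.A} : Repl n u v → Repl n (a :: u) (a :: v)
  | repl {a : Q.A} {p : List Q.A} {n : ℕ} {u v : List Q.A} :
      Q.IsBypass a p → Repl n u v → Repl (n + 1) (a :: u) (p ++ v)

/-- `v` is derived of `u` of order `t`. -/
def DerivedOfOrder (t : ℕ) (u v : List Q.A) : Prop := 1 ≤ t ∧ Q.Repl t u v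

/-- `v` is derived of `u` (of some order `t ≥ 1`). -/
def Derived (u v : List Q.A) : Prop := ∃ t, Q.DerivedOfOrder t u v

/-- `W(α)` : the number of bypasses of the form `(α, u)`. -/
noncomputable def Wa (α : Q.A) : ℕ := Nat.card {u : List Q.A // Q.IsBypass α u}

/-- `W(u)` for a path `u = α_n ⋯ α_1` : the sum of the `W(α_i)`. -/
noncomputable def Wp (u : List Q.A) : ℕ := (u.map Q.Wa).sum

/-- A linear order `<` on the nontrivial paths of `Q` refining the `W`-ordering and
compatible with concatenation, as in Le Meur's Definition 2.5. -/
structure PathOrder where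
  lt : List Q.A → List Q.A → Prop
  irrefl : ∀ p, Q.IsPath p → ¬ lt p p
  trans' : ∀ p q r, lt p q → lt q r → lt p r
  total' : ∀ p q, Q.IsPath p → Q.IsPath q → p ≠ q → lt p q ∨ lt q p
  wlt : ∀ p q, Q.IsPath p → Q.IsPath q → Q.Wp p < Q.Wp q → lt p q
  concat : ∀ u u' v v' : List Q.A, lt v u → lt v' u' →
    Q.IsPath (v ++ v') → Q.IsPath (u ++ u') → lt (v ++ v') (u ++ u')

end Basic

/-- Lexicographic (strict) order on bypasses: `(α,u) < (β,v)` iff `α < β`, or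
`α = β` and `u < v`. -/
def PathOrder.bplt {Q : Quiv} (o : Q.PathOrder) (b c : Q.A × List Q.A) : Prop :=
  o.lt [b.1] [c.1] ∨ (b.1 = c.1 ∧ o.lt b.2 c.2)

/-- Lexicographic non-strict order on bypasses. -/
def PathOrder.bple {Q : Quiv} (o : Q.PathOrder) (b c : Q.A × List Q.A) : Prop :=
  o.bplt b c ∨ b = c

section Linear

variable (Q : Quiv) (k : Type) [Field k]

/-- Concatenation product on the free `k`-module on lists of arrows (the morphism
spaces of the path category `kQ`). -/
noncomputable def mulF (f g : List Q.A →₀ k) : List Q.A →₀ k :=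
  f.sum fun p c => g.sum fun q d => Finsupp.single (p ++ q) (c * d)

/-- Image of the arrow `a` under the transvection `φ_{α,u,τ}`. -/
noncomputable def arrowImg (α : Q.A) (u : List Q.A) (τ : k) (a : Q.A) : List Q.A →₀ k :=
  if a = α then Finsupp.single [a] 1 + τ • Finsupp.single u 1 else Finsupp.single [a] 1

/-- Image of a path under the transvection `φ_{α,u,τ}`. -/
noncomputable def substPoly (α : Q.A) (u : List Q.A) (τ : k) : List Q.A → (List Q.A →₀ k)
  | [] => Finsupp.single [] 1
  | a :: rest => mulF Q k (arrowImg Q k α u τ a) (substPoly α u τ rest)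

/-- The transvection `φ_{α,u,τ}` as a linear endomorphism of `kQ` : it is the
`k`-linear automorphism of `kQ` fixing every vertex, sending `α` to `α + τ u`, and
fixing every other arrow. -/
noncomputable def substMap (α : Q.A) (u : List Q.A) (τ : k) :
    Module.End k (List Q.A →₀ k) :=
  Finsupp.linearCombination k (substPoly Q k α u τ)

/-- `ψ` lies in the group `T` generated by the transvections, i.e. it is a finite
product of transvections. -/
def MemT (ψ : Module.End k (List Q.A →₀ k)) : Prop :=
  ∃ L : List (Q.A × List Q.A × k),
    (∀ x ∈ L, Q.IsBypass x.1 x.2.1) ∧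
    ψ = (L.map fun x => substMap Q k x.1 x.2.1 x.2.2).prod

/-- `r'` is a subexpression of `r`. -/
def Subexpr (r' r : List Q.A →₀ k) : Prop :=
  r'.support ⊆ r.support ∧ ∀ p ∈ r'.support, r' p = r p

/-- A minimal relation of `I` : a nonzero `r ∈ I` such that `0` and `r` are the only
subexpressions of `r` lying in `I`. -/
def IsMinimalRel (I : Submodule k (List Q.A →₀ k)) (r : List Q.A →₀ k) : Prop :=
  r ∈ I ∧ r ≠ 0 ∧ ∀ r', Subexpr Q k r' r → r' ∈ I → r' = 0 ∨ r' = r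

/-- `ReplExp g u v c` : `v` is obtained from the path `u` by replacing some of its
arrows `a` (at increasing positions) by paths `w ∈ supp(g a)`, `w ≠ a`, and `c` is
the product of the corresponding coefficients `w^*(g a)`. -/
inductive ReplExp (g : Q.A → (List Q.A →₀ k)) : List Q.A → List Q.A → k → Prop
  | nil : ReplExp g [] [] 1
  | keep (a : Q.A) {u v : List Q.A} {c : k} :
      ReplExp g u v c → ReplExp g (a :: u) (a :: v) c
  | repl (a : Q.A) {w u v : List Q.A} {c : k} :
      w ∈ (g a).support → w ≠ [a] → ReplExp g u v c →
      ReplExp g (a :: u) (w ++ v) ((g a) w * c)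

/-- The homotopy relation `∼_I` on walks. A walk is a list of pairs `(a, d)` where
`a` is an arrow and `d` is `true` for `a` and `false` for the formal inverse `a⁻¹`;
the relation is the smallest equivalence relation compatible with concatenation,
cancelling `a a⁻¹` and `a⁻¹ a`, and identifying any two paths lying in the support
of a minimal relation of `I`. -/
inductive Homotopic (I : Submodule k (List Q.A →₀ k)) :
    List (Q.A × Bool) → List (Q.A × Bool) → Prop
  | refl (w : List (Q.A × Bool)) : Homotopic I w w
  | symm {w w' : List (Q.A × Bool)} : Homotopic I w w' → Homotopic I w' w
  | trans {w w' w'' : List (Q.A × Bool)} :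
      Homotopic I w w' → Homotopic I w' w'' → Homotopic I w w''
  | cancel (a : Q.A) : Homotopic I [(a, true), (a, false)] []
  | cancel' (a : Q.A) : Homotopic I [(a, false), (a, true)] []
  | rel {r : List Q.A →₀ k} (hr : IsMinimalRel Q k I r) {u v : List Q.A}
      (hu : u ∈ r.support) (hv : v ∈ r.support) :
      Homotopic I (u.map fun a => (a, true)) (v.map fun a => (a, true))
  | congr (w x : List (Q.A × Bool)) {v v' : List (Q.A × Bool)} :
      Homotopic I v v' → Homotopic I (w ++ v ++ x) (w ++ v' ++ x)

/-- `I` is a monomial admissible ideal of `kQ` : every element is a combination of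
paths of length `≥ 2`, membership is detected on supports (monomiality), and `I`
is stable under concatenation with paths on either side. -/
def IsMonomialAdmissible (I : Submodule k (List Q.A →₀ k)) : Prop :=
  (∀ r ∈ I, ∀ p ∈ (r : List Q.A →₀ k).support, Q.IsPath p ∧ 2 ≤ p.length) ∧
  (∀ r : List Q.A →₀ k, (∀ p ∈ r.support, Finsupp.single p (1 : k) ∈ I) → r ∈ I) ∧
  (∀ r ∈ I, ∀ p ∈ (r : List Q.A →₀ k).support, Finsupp.single p (1 : k) ∈ I) ∧
  (∀ p q : List Q.A, Q.IsPath p → Finsupp.single q (1 : k) ∈ I → Q.IsPath (p ++ q) →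
    Finsupp.single (p ++ q) (1 : k) ∈ I) ∧
  (∀ p q : List Q.A, Finsupp.single p (1 : k) ∈ I → Q.IsPath q → Q.IsPath (p ++ q) →
    Finsupp.single (p ++ q) (1 : k) ∈ I)

/-- A `k`-linear automorphism of `kQ` (fixing the vertices) is the transvection
`φ_{α,u,τ}` when its underlying linear map is `substMap α u τ`. -/
def IsTransvectionE (ψ : (List Q.A →₀ k) ≃ₗ[k] (List Q.A →₀ k))
    (α : Q.A) (u : List Q.A) (τ : k) : Prop :=
  (ψ : (List Q.A →₀ k) →ₗ[k] (List Q.A →₀ k)) = substMap Q k α u τ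

/-- The subgroup `T_{<(α,u)}` generated by the transvections `φ_{β,v,τ}` with
`(β,v) < (α,u)`. -/
noncomputable def TltSub (o : Q.PathOrder) (b : Q.A × List Q.A) :
    Subgroup ((List Q.A →₀ k) ≃ₗ[k] (List Q.A →₀ k)) :=
  Subgroup.closure
    {ψ | ∃ β v τ, Q.IsBypass β v ∧ o.bplt (β, v) b ∧ IsTransvectionE Q k ψ β v τ}

/-- The subgroup `T_{≤(α,u)}` generated by the transvections `φ_{β,v,τ}` with
`(β,v) ≤ (α,u)`. -/
noncomputable def TleSub (o : Q.PathOrder) (b : Q.A × List Q.A) :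
    Subgroup ((List Q.A →₀ k) ≃ₗ[k] (List Q.A →₀ k)) :=
  Subgroup.closure
    {ψ | ∃ β v τ, Q.IsBypass β v ∧ o.bple (β, v) b ∧ IsTransvectionE Q k ψ β v τ}

/-- The set `T_{(α,u)} = {φ_{α,u,τ} | τ ∈ k}`. -/
def TsingleSet (b : Q.A × List Q.A) :
    Set ((List Q.A →₀ k) ≃ₗ[k] (List Q.A →₀ k)) :=
  {ψ | ∃ τ : k, IsTransvectionE Q k ψ b.1 b.2 τ}

/-- `m` is the `<`-maximum of the support of `r`. -/
def IsMaxPath (o : Q.PathOrder) (r : List Q.A →₀ k) (m : List Q.A) : Prop :=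
  m ∈ r.support ∧ ∀ p ∈ r.support, p ≠ m → o.lt p m

/-- `B` is the Gröbner basis of the subspace `F` with respect to the path order `o` :
`B` spans `F` and each `r ∈ B` has a leading path `m` (with coefficient `1`, all other
paths of `supp r` being `<`-smaller) whose coefficient in every other element of `B`
vanishes. -/
def IsGB (o : Q.PathOrder) (F : Submodule k (List Q.A →₀ k))
    (B : Set (List Q.A →₀ k)) : Prop :=
  B ⊆ (F : Set (List Q.A →₀ k)) ∧ Submodule.span k B = F ∧
  ∀ r ∈ B, ∃ m, m ∈ (r : List Q.A →₀ k).support ∧ r m = 1 ∧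
    (∀ p ∈ (r : List Q.A →₀ k).support, p ≠ m → o.lt p m) ∧
    ∀ r' ∈ B, r' ≠ r → (r' : List Q.A →₀ k) m = 0

end Linear

section Aux

variable {Q : Quiv}

lemma src_eq' {p : List Q.A} (hp : p ≠ []) : Q.src p = some (Q.s (p.head hp)) := by
  simp [Quiv.src, List.head?_eq_head hp]

lemma tgt_eq' {p : List Q.A} (hp : p ≠ []) : Q.tgt p = some (Q.t (p.getLast hp)) := by
  simp [Quiv.tgt, List.getLast?_eq_getLast hp]

lemma chain_get {p : List Q.A} (hp : p.Chain' (fun a b => Q.t a = Q.s b))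
    {i : ℕ} (hi : i + 1 < p.length) : Q.t p[i] = Q.s p[i + 1] := by
  simpa using List.isChain_iff_getElem.mp hp i (by omega)

lemma bypass_len (hnm : Q.NoMultipleArrows) {a : Q.A} {v : List Q.A}
    (hb : Q.IsBypass a v) : 2 ≤ v.length := by
  obtain ⟨⟨hne, hch⟩, hsrc, htgt, hna⟩ := hb
  rcases v with _ | ⟨b, w⟩
  · exact absurd rfl hne
  rcases w with _ | ⟨c, w⟩
  · exfalso
    apply hna
    have h1 : Q.s b = Q.s a := by simpa [Quiv.src] using hsrc
    have h2 : Q.t b = Q.t a := by simpa [Quiv.tgt] using htgt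
    rw [hnm b a h1 h2]
  · simp [List.length]

lemma bypass_head_ne (hnc : Q.NoCycle) (hnm : Q.NoMultipleArrows) {a : Q.A}
    {v : List Q.A} (hb : Q.IsBypass a v) (hne : v ≠ []) (hh : v.head hne = a) :
    False := by
  have h2 := bypass_len hnm hb
  obtain ⟨⟨hne', hch⟩, hsrc, htgt, hna⟩ := hb
  rcases v with _ | ⟨b, w⟩
  · exact absurd rfl hne'
  have hb_eq : b = a := hh
  subst hb_eq
  have hw : w ≠ [] := by
    intro e; subst e; simp at h2
  have hchw : w.Chain' (fun a b => Q.t a = Q.s b) := (List.isChain_cons.mp hch).2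
  have hlink : Q.t b = Q.s (w.head hw) :=
    (List.isChain_cons.mp hch).1 (w.head hw) (by simp [List.head?_eq_head hw])
  have hlast : Q.t (w.getLast hw) = Q.t b := by
    have := tgt_eq' (Q := Q) hne'
    rw [this] at htgt
    have h3 : (b :: w).getLast hne' = w.getLast hw := List.getLast_cons hw
    rw [h3] at htgt
    exact Option.some.inj htgt
  exact hnc w ⟨hw, hchw⟩ (by rw [src_eq' hw, tgt_eq' hw, ← hlink, hlast])

lemma aux_nodup_key (hnc : Q.NoCycle) {p : List Q.A} (hp : Q.IsPath p)
    (i j : Fin p.length) (hget : p.get i = p.get j) (hlt : (i : ℕ) < (j : ℕ)) :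
    False := by
  have hj : (j : ℕ) < p.length := j.isLt
  have hlen_take : (p.take (j : ℕ)).length = (j : ℕ) := by
    rw [List.length_take]; omega
  set q := (p.take (j : ℕ)).drop (i : ℕ) with hq
  have hqlen : q.length = (j : ℕ) - (i : ℕ) := by
    simp [hq, hlen_take]
  have hqne : q ≠ [] := by
    rw [← List.length_pos_iff]; omega
  have hqinfix : q <:+: p :=
    ((p.take (j : ℕ)).drop_suffix (i : ℕ)).isInfix.trans (p.take_prefix (j : ℕ)).isInfix
  have hqch : q.Chain' (fun a b => Q.t a = Q.s b) := hp.2.infix hqinfix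
  have hhead : q.head hqne = p[(i : ℕ)] := by
    rw [List.head_drop]
    exact List.getElem_take
  have hlast : q.getLast hqne = p[(j : ℕ) - 1] := by
    rw [List.getLast_drop]
    rw [List.getLast_eq_getElem]
    have : (p.take (j : ℕ)).length - 1 = (j : ℕ) - 1 := by omega
    simp only [this]
    exact List.getElem_take
  have hstep : Q.t p[(j : ℕ) - 1] = Q.s p[(j : ℕ)] := by
    have h1 : (j : ℕ) - 1 + 1 = (j : ℕ) := by omega
    have := chain_get (Q := Q) hp.2 (i := (j : ℕ) - 1) (by omega)
    simpa only [h1] using this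
  have hgetij : p[(i : ℕ)] = p[(j : ℕ)] := by
    simpa [List.get_eq_getElem] using hget
  exact hnc q ⟨hqne, hqch⟩ (by
    rw [src_eq' hqne, tgt_eq' hqne, hhead, hlast, hstep, hgetij])

lemma path_nodup (hnc : Q.NoCycle) {p : List Q.A} (hp : Q.IsPath p) : p.Nodup := by
  rw [List.nodup_iff_injective_get]
  intro i j hget
  by_contra hne
  have hne' : (i : ℕ) ≠ (j : ℕ) := fun e => hne (Fin.ext e)
  rcases lt_trichotomy (i : ℕ) (j : ℕ) with hlt | heq | hgt
  · exact aux_nodup_key hnc hp i j hget hlt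
  · exact hne' heq
  · exact aux_nodup_key hnc hp j i hget.symm hgt

lemma finite_bypass (hnc : Q.NoCycle) [Fintype Q.A] (β : Q.A) :
    Finite {v : List Q.A // Q.IsBypass β v} := by
  haveI := (List.finite_length_le Q.A (Fintype.card Q.A)).to_subtype
  refine Finite.of_injective
    (fun x => (⟨x.1, (path_nodup hnc x.2.1).length_le_card⟩ :
      {l : List Q.A | l.length ≤ Fintype.card Q.A})) ?_
  intro a b hab
  simp only [Subtype.mk.injEq] at hab
  exact Subtype.ext hab

lemma repl_len {u v : List Q.A} {i : ℕ} (hi : i < u.length) (hv : 2 ≤ v.length) :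
    (u.take i ++ (v ++ u.drop (i + 1))).length = u.length + v.length - 1 := by
  simp only [List.length_append, List.length_take, List.length_drop]
  omega

lemma repl_bypass (hnc : Q.NoCycle) (hnm : Q.NoMultipleArrows) {α : Q.A}
    {u : List Q.A} (hu : Q.IsBypass α u) (i : ℕ) (hi : i < u.length)
    {v : List Q.A} (hv : Q.IsBypass u[i] v) :
    Q.IsBypass α (u.take i ++ (v ++ u.drop (i + 1))) := by
  have hvlen := bypass_len hnm hv
  have hulen := bypass_len hnm hu
  obtain ⟨⟨hune, huch⟩, husrc, hutgt, huna⟩ := hu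
  obtain ⟨⟨hvne, hvch⟩, hvsrc, hvtgt, hvna⟩ := hv
  set A := u.take i with hA
  set B := u.drop (i + 1) with hB
  set a := u[i] with ha
  have hA_a_B : A ++ (a :: B) = u := by
    rw [hA, hB, ha, List.getElem_cons_drop]; exact List.take_append_drop _ _
  have huch' : (A ++ (a :: B)).Chain' (fun a b => Q.t a = Q.s b) := by
    rw [hA_a_B]; exact huch
  obtain ⟨hchA, hchaB, hlinkA⟩ := List.isChain_append.mp huch'
  obtain ⟨hlinkB, hchB⟩ := List.isChain_cons.mp hchaB
  have hvhead : Q.s (v.head hvne) = Q.s a := by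
    rw [src_eq' hvne] at hvsrc
    exact Option.some.inj hvsrc
  have hvlast : Q.t (v.getLast hvne) = Q.t a := by
    rw [tgt_eq' hvne] at hvtgt
    exact Option.some.inj hvtgt
  have hrlen : (A ++ (v ++ B)).length = u.length + v.length - 1 := repl_len hi hvlen
  refine ⟨⟨?_, ?_⟩, ?_, ?_, ?_⟩
  · rw [← List.length_pos_iff]; omega
  · apply List.isChain_append.mpr
    refine ⟨hchA, ?_, ?_⟩
    · rw [List.isChain_append]
      refine ⟨hvch, hchB, ?_⟩
      intro x hx y hy
      rw [List.getLast?_eq_getLast hvne, Option.mem_def, Option.some.injEq] at hx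
      subst hx
      rw [hvlast]
      exact hlinkB y hy
    · intro x hx y hy
      rw [List.head?_append, List.head?_eq_head hvne] at hy
      have hy' : y = v.head hvne := by simpa [Option.or] using hy.symm
      subst hy'
      rw [hvhead]
      exact hlinkA x hx a (by simp)
  · -- src
    have h1 : Q.src (A ++ (v ++ B)) = Q.src (A ++ (a :: B)) := by
      unfold Quiv.src
      rcases A with _ | ⟨x, A'⟩
      · simp [List.head?_eq_head hvne, hvhead]
      · simp
    rw [h1, hA_a_B]; exact husrc
  · -- tgt
    have h2 : Q.tgt (A ++ (v ++ B)) = Q.tgt (A ++ (a :: B)) := by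
      unfold Quiv.tgt
      rcases eq_or_ne B [] with hBe | hBe
      · rw [hBe]
        simp [List.getLast?_append, List.getLast?_eq_getLast hvne, hvlast]
      · have h4 : (a :: B).getLast? = some (B.getLast hBe) := by
          rw [List.getLast?_eq_getLast (List.cons_ne_nil a B), List.getLast_cons hBe]
        have h5 : (v ++ B).getLast? = some (B.getLast hBe) := by
          rw [List.getLast?_append, List.getLast?_eq_getLast hBe]; rfl
        rw [List.getLast?_append (l' := v ++ B), List.getLast?_append (l' := a :: B), h4, h5]
    rw [h2, hA_a_B]; exact hutgt
  · intro e
    have := congrArg List.length e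
    rw [hrlen] at this
    simp at this
    omega

lemma repl_inj_aux (hnc : Q.NoCycle) (hnm : Q.NoMultipleArrows) {u : List Q.A}
    (hu : Q.IsPath u) {i j : ℕ} (hiu : i < u.length) (hju : j < u.length)
    {v w : List Q.A} (hv : Q.IsBypass u[i] v) (hw : Q.IsBypass u[j] w)
    (hij : i < j)
    (heq : u.take i ++ (v ++ u.drop (i + 1)) = u.take j ++ (w ++ u.drop (j + 1))) :
    False := by
  have hvne := hv.1.1
  have hlen_i : (u.take i).length = i := by rw [List.length_take]; omega
  have hlen_j : (u.take j).length = j := by rw [List.length_take]; omega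
  have hd := congrArg (fun l => l.drop i) heq
  rw [List.drop_append_of_le_length (by omega), List.drop_append_of_le_length (by omega)] at hd
  have hnil : (u.take i).drop i = [] := List.drop_eq_nil_of_le (le_of_eq hlen_i)
  rw [hnil, List.nil_append] at hd
  have hqne : ((u.take j).drop i) ≠ [] := by
    rw [← List.length_pos_iff, List.length_drop, hlen_j]; omega
  have hheads := congrArg List.head? hd
  rw [List.head?_append, List.head?_append, List.head?_eq_head hvne,
    List.head?_eq_head hqne] at hheads
  have hhead : v.head hvne = ((u.take j).drop i).head hqne := by
    simpa [Option.or] using hheads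
  have hhead2 : ((u.take j).drop i).head hqne = u[i] := by
    rw [List.head_drop]
    exact List.getElem_take
  exact bypass_head_ne hnc hnm hv hvne (hhead.trans hhead2)

lemma sum_map_eq_sum_fin (f : Q.A → ℕ) (u : List Q.A) :
    (u.map f).sum = ∑ i : Fin u.length, f (u.get i) := by
  induction u with
  | nil => simp
  | cons a u ih =>
    rw [List.map_cons, List.sum_cons, ih]
    exact (Fin.sum_univ_succ (f := fun i : Fin (u.length + 1) => f ((a :: u).get i))).symm

end Aux

/-- For any bypass `(α,u)` in `Q`, one has `W(u) < W(α)`. -/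
theorem stmt_5 (Q : Quiv) [Fintype Q.V] [Fintype Q.A]
    (hnc : Q.NoCycle) (hnm : Q.NoMultipleArrows)
    (α : Q.A) (u : List Q.A) (h : Q.IsBypass α u) :
    Q.Wp u < Q.Wa α := by
  classical
  haveI hfin : ∀ β : Q.A, Finite {v : List Q.A // Q.IsBypass β v} :=
    fun β => finite_bypass hnc β
  have hulen := bypass_len hnm h
  let g : (Σ i : Fin u.length, {v : List Q.A // Q.IsBypass (u.get i) v}) ⊕ Unit →
      {v : List Q.A // Q.IsBypass α v} :=
    Sum.elim
      (fun x => ⟨u.take (x.1 : ℕ) ++ (x.2.1 ++ u.drop ((x.1 : ℕ) + 1)),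
        repl_bypass hnc hnm h (x.1 : ℕ) x.1.isLt
          (by simpa [List.get_eq_getElem] using x.2.2)⟩)
      (fun _ => ⟨u, h⟩)
  have hginj : Function.Injective g := by
    rintro (⟨i, v, hv⟩ | ⟨⟩) (⟨j, w, hw⟩ | ⟨⟩) hxy
    · have he : u.take (i : ℕ) ++ (v ++ u.drop ((i : ℕ) + 1)) =
          u.take (j : ℕ) ++ (w ++ u.drop ((j : ℕ) + 1)) :=
        congrArg Subtype.val hxy
      have hv' : Q.IsBypass u[(i : ℕ)] v := by
        simpa [List.get_eq_getElem] using hv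
      have hw' : Q.IsBypass u[(j : ℕ)] w := by
        simpa [List.get_eq_getElem] using hw
      have hij : (i : ℕ) = (j : ℕ) := by
        rcases lt_trichotomy (i : ℕ) (j : ℕ) with hlt | he' | hgt
        · exact absurd (repl_inj_aux hnc hnm h.1 i.isLt j.isLt hv' hw' hlt he) id
        · exact he'
        · exact absurd (repl_inj_aux hnc hnm h.1 j.isLt i.isLt hw' hv' hgt he.symm) id
      have hij' : i = j := Fin.ext hij
      subst hij'
      have hvw : v = w := by
        have h1 := List.append_cancel_left he
        exact List.append_cancel_right h1
      subst hvw
      rfl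
    · exfalso
      have he : u.take (i : ℕ) ++ (v ++ u.drop ((i : ℕ) + 1)) = u :=
        congrArg Subtype.val hxy
      have hv' : Q.IsBypass u[(i : ℕ)] v := by
        simpa [List.get_eq_getElem] using hv
      have hvlen := bypass_len hnm hv'
      have hl := congrArg List.length he
      rw [repl_len i.isLt hvlen] at hl
      omega
    · exfalso
      have he : u = u.take (j : ℕ) ++ (w ++ u.drop ((j : ℕ) + 1)) :=
        congrArg Subtype.val hxy
      have hw' : Q.IsBypass u[(j : ℕ)] w := by
        simpa [List.get_eq_getElem] using hw
      have hwlen := bypass_len hnm hw'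
      have hl := congrArg List.length he
      rw [repl_len j.isLt hwlen] at hl
      omega
    · rfl
  have hcard :
      Nat.card ((Σ i : Fin u.length, {v : List Q.A // Q.IsBypass (u.get i) v}) ⊕ Unit) ≤
        Q.Wa α :=
    Nat.card_le_card_of_injective g hginj
  have h1 :
      Nat.card ((Σ i : Fin u.length, {v : List Q.A // Q.IsBypass (u.get i) v}) ⊕ Unit) =
        Nat.card (Σ i : Fin u.length, {v : List Q.A // Q.IsBypass (u.get i) v}) + 1 := by
    rw [Nat.card_sum]
    simp
  have h2 :
      Nat.card (Σ i : Fin u.length, {v : List Q.A // Q.IsBypass (u.get i) v}) =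
        ∑ i : Fin u.length, Q.Wa (u.get i) := by
    haveI : ∀ i : Fin u.length, Fintype {v : List Q.A // Q.IsBypass (u.get i) v} :=
      fun i => Fintype.ofFinite _
    rw [Nat.card_eq_fintype_card, Fintype.card_sigma]
    exact Finset.sum_congr rfl fun i _ => (Nat.card_eq_fintype_card).symm
  have h3 : Q.Wp u = ∑ i : Fin u.length, Q.Wa (u.get i) := sum_map_eq_sum_fin Q.Wa u
  rw [h1, h2] at hcard
  omega

end Quiv
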